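/- Let P be a complemented poset with antitone complementation satisfying x'' ≤ x for all x, and let I be an ideal of P. Then I₀ := {x : x' ∈ I} is a filter of P. -/

import Mathlib

variable {P : Type*}

/-- Lower cone of a set. -/
def lowerCone [Preorder P] (A : Set P) : Set P := {x | ∀ y ∈ A, x ≤ y}

/-- Upper cone of a set. -/
def upperCone [Preorder P] (A : Set P) : Set P := {x | ∀ y ∈ A, y ≤ x}

/-- An ideal of a poset: nonempty, downward closed, any two elements have a
common upper bound inside. -/
def IsIdeal [Preorder P] (I : Set P) : Prop :=
  I.Nonempty ∧ (∀ x ∈ I, ∀ y, y ≤ x → y ∈ I) ∧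
    ∀ x ∈ I, ∀ y ∈ I, ∃ z ∈ I, x ≤ z ∧ y ≤ z

/-- A filter of a poset: nonempty, upward closed, any two elements have a
common lower bound inside. -/
def IsPosetFilter [Preorder P] (F : Set P) : Prop :=
  F.Nonempty ∧ (∀ x ∈ F, ∀ y, x ≤ y → y ∈ F) ∧
    ∀ x ∈ F, ∀ y ∈ F, ∃ z ∈ F, z ≤ x ∧ z ≤ y

/-- `c` is a complementation on a bounded poset: for each `x`, `x ∨ c x` exists
and equals `⊤`, and `x ∧ c x` exists and equals `⊥`. -/
def IsComplementation [PartialOrder P] [BoundedOrder P] (c : P → P) : Prop :=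
  ∀ x : P, IsLUB {x, c x} ⊤ ∧ IsGLB {x, c x} ⊥

/-- A prime ideal. -/
def IsPrimeIdeal [Preorder P] (I : Set P) : Prop :=
  IsIdeal I ∧ I ≠ Set.univ ∧ ∀ x y : P, lowerCone {x, y} ⊆ I → x ∈ I ∨ y ∈ I

/-- A prime filter. -/
def IsPrimeFilter [Preorder P] (F : Set P) : Prop :=
  IsPosetFilter F ∧ F ≠ Set.univ ∧ ∀ x y : P, upperCone {x, y} ⊆ F → x ∈ F ∨ y ∈ F

/-- A c-ideal: an ideal of the form `F₀ = {x | c x ∈ F}` for some filter `F`. -/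
def IsCIdeal [PartialOrder P] [BoundedOrder P] (c : P → P) (I : Set P) : Prop :=
  IsIdeal I ∧ ∃ F : Set P, IsPosetFilter F ∧ I = {x | c x ∈ F}

theorem stmt8 [PartialOrder P] [BoundedOrder P] (c : P → P)
    (hc : IsComplementation c)
    (hanti : ∀ x y : P, x ≤ y → c y ≤ c x)
    (hdn : ∀ x : P, c (c x) ≤ x)
    (I : Set P) (hI : IsIdeal I) :
    IsPosetFilter {x : P | c x ∈ I} := by
  obtain ⟨⟨a, ha⟩, hdown, hdir⟩ := hI
  refine ⟨⟨⊤, ?_⟩, ?_, ?_⟩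
  · have hbot : c ⊤ ≤ ⊥ := (hc ⊤).2.2 (by
      intro y hy; rcases hy with h | h
      · rw [h]; exact le_top
      · exact h ▸ le_rfl)
    exact hdown a ha _ (hbot.trans bot_le)
  · intro x hx y hxy
    exact hdown _ hx _ (hanti x y hxy)
  · intro x hx y hy
    obtain ⟨z, hz, h1, h2⟩ := hdir _ hx _ hy
    exact ⟨c z, hdown z hz _ (hdn z), (hanti _ _ h1).trans (hdn x),
      (hanti _ _ h2).trans (hdn y)⟩
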